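/- Let 𝕋 be the unit circle with normalized Lebesgue (Haar) measure |·|, let (n_j) be a strictly increasing sequence of positive integers, and let E ⊆ 𝕋 be a measurable set with |E| > 0. Then the set limsup_{j→∞} F_{n_j}(E) = ⋂_{k≥1} ⋃_{j≥k} {z^{n_j} : z ∈ E} has full outer measure: |limsup_{j→∞} F_{n_j}(E)| = 1. -/

import Mathlib

open Filter Topology MeasureTheory

/-- The normalized Lebesgue (Haar) measure on the unit circle `𝕋 ⊆ ℂ`, realized as the
pushforward of Lebesgue measure on `[0,1)` under `t ↦ e^{2πit}`.  Applied to an arbitrary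
(not necessarily measurable) set it gives the outer measure. -/
noncomputable def circleHaar : Measure ℂ :=
  Measure.map (fun t : ℝ => Complex.exp ((2 * Real.pi * t : ℝ) * Complex.I))
    (volume.restrict (Set.Ico (0 : ℝ) 1))

section Auxiliary

open Set
open scoped ENNReal

/-- The exponential parametrization of the circle. -/
noncomputable def cExp (t : ℝ) : ℂ := Complex.exp ((2 * Real.pi * t : ℝ) * Complex.I)

lemma cExp_cont : Continuous cExp := by
  unfold cExp; fun_prop

lemma cExp_meas : Measurable cExp := cExp_cont.measurable

lemma cExp_add_int (t : ℝ) (m : ℤ) : cExp (t + m) = cExp t := by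
  unfold cExp
  rw [Complex.exp_eq_exp_iff_exists_int]
  exact ⟨m, by push_cast; ring⟩

lemma cExp_pow (t : ℝ) (k : ℕ) : (cExp t) ^ k = cExp (k * t) := by
  unfold cExp
  rw [← Complex.exp_nat_mul]
  congr 1; push_cast; ring

lemma cExp_mem_sphere (t : ℝ) : cExp t ∈ Metric.sphere (0 : ℂ) 1 := by
  simp only [Metric.mem_sphere, dist_zero_right]
  unfold cExp
  rw [Complex.norm_exp]
  simp

lemma cExp_injOn : InjOn cExp (Ico (0:ℝ) 1) := by
  intro a ha b hb hab
  unfold cExp at hab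
  rw [Complex.exp_eq_exp_iff_exists_int] at hab
  obtain ⟨m, hm⟩ := hab
  have hI : (Complex.I : ℂ) ≠ 0 := Complex.I_ne_zero
  have h' : ((2 * Real.pi * a : ℝ) : ℂ) = ((2 * Real.pi * b + m * (2 * Real.pi) : ℝ) : ℂ) := by
    apply mul_right_cancel₀ hI
    push_cast at hm ⊢
    linear_combination hm
  have h'' : 2 * Real.pi * a = 2 * Real.pi * b + m * (2 * Real.pi) := by exact_mod_cast h'
  have hab' : a = b + m := by
    have hpi := Real.pi_pos
    nlinarith [h'']
  have hm0 : m = 0 := by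
    simp only [mem_Ico] at ha hb
    have : (m : ℝ) = a - b := by linarith
    have h1 : (-1 : ℝ) < m := by rw [this]; linarith [ha.1, ha.2, hb.1, hb.2]
    have h2 : (m : ℝ) < 1 := by rw [this]; linarith [ha.1, ha.2, hb.1, hb.2]
    have h1' : (-1:ℤ) < m := by exact_mod_cast h1
    have h2' : (m:ℤ) < 1 := by exact_mod_cast h2
    omega
  rw [hm0] at hab'
  simpa using hab'

lemma cExp_surjOn : ∀ z ∈ Metric.sphere (0:ℂ) 1, ∃ t ∈ Ico (0:ℝ) 1, cExp t = z := by
  intro z hz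
  have habs : ‖z‖ = 1 := by
    simpa [Complex.dist_eq] using hz
  set t0 : ℝ := Complex.arg z / (2 * Real.pi) with ht0
  refine ⟨Int.fract t0, ⟨Int.fract_nonneg _, Int.fract_lt_one _⟩, ?_⟩
  have : cExp (Int.fract t0) = cExp t0 := by
    rw [Int.fract]
    have := cExp_add_int (t0 - ⌊t0⌋) ⌊t0⌋
    simpa using this.symm
  rw [this]
  unfold cExp
  have hpi : (2 * Real.pi) ≠ 0 := by positivity
  rw [ht0]
  rw [mul_div_cancel₀ _ hpi]
  have := Complex.norm_mul_exp_arg_mul_I z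
  rw [habs] at this
  simpa using this

lemma circleHaar_def : circleHaar = Measure.map cExp (volume.restrict (Set.Ico (0 : ℝ) 1)) := rfl

lemma circleHaar_apply {s : Set ℂ} (hs : MeasurableSet s) :
    circleHaar s = volume (cExp ⁻¹' s ∩ Ico (0:ℝ) 1) := by
  rw [circleHaar_def, Measure.map_apply cExp_meas hs, Measure.restrict_apply']
  exact measurableSet_Ico

lemma circleHaar_univ : circleHaar univ = 1 := by
  rw [circleHaar_apply MeasurableSet.univ]
  simp

/-- key outer-measure comparison -/
lemma circleHaar_le_vol_preimage {S : Set ℂ} (hS : S ⊆ Metric.sphere (0:ℂ) 1) :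
    circleHaar S ≤ volume (cExp ⁻¹' S ∩ Ico (0:ℝ) 1) := by
  set W : Set ℝ := toMeasurable volume (cExp ⁻¹' S ∩ Ico (0:ℝ) 1) ∩ Ico (0:ℝ) 1 with hW
  have hWmeas : MeasurableSet W :=
    (measurableSet_toMeasurable _ _).inter measurableSet_Ico
  have hWsub : cExp ⁻¹' S ∩ Ico (0:ℝ) 1 ⊆ W :=
    subset_inter (subset_toMeasurable _ _) inter_subset_right
  have hWvol : volume W ≤ volume (cExp ⁻¹' S ∩ Ico (0:ℝ) 1) := by
    calc volume W ≤ volume (toMeasurable volume (cExp ⁻¹' S ∩ Ico (0:ℝ) 1)) :=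
          measure_mono inter_subset_left
      _ = volume (cExp ⁻¹' S ∩ Ico (0:ℝ) 1) := measure_toMeasurable _
  have hT : MeasurableSet (cExp '' W) :=
    hWmeas.image_of_continuousOn_injOn cExp_cont.continuousOn
      (cExp_injOn.mono inter_subset_right)
  have hST : S ⊆ cExp '' W := by
    intro z hz
    obtain ⟨t, ht, rfl⟩ := cExp_surjOn z (hS hz)
    exact ⟨t, hWsub ⟨hz, ht⟩, rfl⟩
  have hpre : cExp ⁻¹' (cExp '' W) ∩ Ico (0:ℝ) 1 = W := by
    apply Subset.antisymm
    · rintro t ⟨ht1, ht2⟩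
      obtain ⟨u, hu, huv⟩ := ht1
      have hu2 : u ∈ Ico (0:ℝ) 1 := by rw [hW] at hu; exact hu.2
      have : u = t := cExp_injOn hu2 ht2 huv
      rwa [← this]
    · intro t ht
      exact ⟨⟨t, ht, rfl⟩, ht.2⟩
  calc circleHaar S ≤ circleHaar (cExp '' W) := measure_mono hST
    _ = volume (cExp ⁻¹' (cExp '' W) ∩ Ico (0:ℝ) 1) := circleHaar_apply hT
    _ = volume W := by rw [hpre]
    _ ≤ _ := hWvol

lemma vol_preimage_add (a : ℝ) (s : Set ℝ) :
    volume ((fun t => t + a) ⁻¹' s) = volume s := by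
  have h1 : Measure.map (fun t : ℝ => t + a) volume = volume := map_add_right_eq_self volume a
  have h2 := MeasurableEquiv.map_apply (μ := volume) (Homeomorph.addRight a).toMeasurableEquiv s
  have heq : ((Homeomorph.addRight a).toMeasurableEquiv : ℝ → ℝ) = (fun t => t + a) := rfl
  rw [heq, h1] at h2
  exact h2.symm

lemma vol_preimage_mul {n : ℝ} (hn : 0 < n) (s : Set ℝ) :
    volume ((fun t => n * t) ⁻¹' s) = ENNReal.ofReal n⁻¹ * volume s := by
  have hmap : Measure.map (fun t : ℝ => n * t) volume
      = ENNReal.ofReal |n⁻¹| • volume := Real.map_volume_mul_left hn.ne'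
  have this := MeasurableEquiv.map_apply (μ := volume) (Homeomorph.mulLeft₀ n hn.ne').toMeasurableEquiv s
  have heq : ((Homeomorph.mulLeft₀ n hn.ne').toMeasurableEquiv : ℝ → ℝ) = (fun t => n * t) := rfl
  rw [heq] at this
  rw [← this, hmap, abs_of_pos (inv_pos.mpr hn)]
  rfl

/-- periodic sets have the same outer measure in each integer-translate of `[0,1)` -/
lemma vol_periodic_block {Q : Set ℝ} (hQ : ∀ (m : ℤ), (fun t => t + (m:ℝ)) ⁻¹' Q = Q) (c : ℤ) :
    volume (Q ∩ Ico (c:ℝ) (c+1)) = volume (Q ∩ Ico (0:ℝ) 1) := by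
  have : (fun t => t + (c:ℝ)) ⁻¹' (Q ∩ Ico (c:ℝ) (c+1)) = Q ∩ Ico (0:ℝ) 1 := by
    rw [preimage_inter, hQ c]
    congr 1
    rw [Set.preimage_add_const_Ico]
    norm_num
  rw [← this, vol_preimage_add]

lemma vol_periodic_interval {Q : Set ℝ} (hQ : ∀ (m : ℤ), (fun t => t + (m:ℝ)) ⁻¹' Q = Q)
    (c : ℤ) (K : ℕ) :
    (K : ℝ≥0∞) * volume (Q ∩ Ico (0:ℝ) 1) ≤ volume (Q ∩ Ico (c:ℝ) (c+K)) := by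
  set W := toMeasurable volume (Q ∩ Ico (c:ℝ) (c+K)) with hW
  have hWm : MeasurableSet W := measurableSet_toMeasurable _ _
  have hsum : ∑ i ∈ Finset.range K, volume (W ∩ Ico ((c:ℝ)+i) (c+i+1))
      ≤ volume W := by
    rw [← measure_biUnion_finset ?hd (fun i _ => hWm.inter measurableSet_Ico)]
    · exact measure_mono (iUnion₂_subset fun i _ => inter_subset_left)
    case hd =>
      intro i hi j hj hij
      apply Disjoint.inter_left' ; apply Disjoint.inter_right'
      rw [Set.Ico_disjoint_Ico]
      rcases lt_or_gt_of_ne hij with h | h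
      · apply le_trans (min_le_left _ _)
        apply le_trans ?_ (le_max_right _ _)
        have : (i:ℝ) + 1 ≤ j := by exact_mod_cast h
        linarith
      · apply le_trans (min_le_right _ _)
        apply le_trans ?_ (le_max_left _ _)
        have : (j:ℝ) + 1 ≤ i := by exact_mod_cast h
        linarith
  have hterm : ∀ i ∈ Finset.range K, volume (Q ∩ Ico (0:ℝ) 1)
      ≤ volume (W ∩ Ico ((c:ℝ)+i) (c+i+1)) := by
    intro i _
    have h1 : Q ∩ Ico ((c:ℝ)+i) (c+i+1) ⊆ W ∩ Ico ((c:ℝ)+i) (c+i+1) := by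
      intro t ht
      have hiK : (i:ℝ) + 1 ≤ K := by exact_mod_cast Finset.mem_range.mp ‹i ∈ Finset.range K›
      refine ⟨subset_toMeasurable _ _ ⟨ht.1, ?_, ?_⟩, ht.2⟩
      · have := ht.2.1; have : (0:ℝ) ≤ i := by positivity
        linarith [ht.2.1]
      · linarith [ht.2.2]
    calc volume (Q ∩ Ico (0:ℝ) 1) = volume (Q ∩ Ico ((c+i:ℤ):ℝ) ((c+i:ℤ)+1)) :=
          (vol_periodic_block hQ (c+i)).symm
      _ = volume (Q ∩ Ico ((c:ℝ)+i) (c+i+1)) := by push_cast; ring_nf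
      _ ≤ _ := measure_mono h1
  calc (K : ℝ≥0∞) * volume (Q ∩ Ico (0:ℝ) 1)
      = ∑ _i ∈ Finset.range K, volume (Q ∩ Ico (0:ℝ) 1) := by
        rw [Finset.sum_const, Finset.card_range, nsmul_eq_mul]
    _ ≤ ∑ i ∈ Finset.range K, volume (W ∩ Ico ((c:ℝ)+i) (c+i+1)) := Finset.sum_le_sum hterm
    _ ≤ volume W := hsum
    _ = volume (Q ∩ Ico (c:ℝ) (c+K)) := measure_toMeasurable _

lemma exists_density_ball {A : Set ℝ} (hAm : MeasurableSet A) (hA : 0 < volume A)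
    {ε : ℝ≥0∞} (hε : ε ≠ 0) :
    ∃ x : ℝ, ∃ r : ℝ, 0 < r ∧
      volume (Metric.closedBall x r \ A) ≤ ε * volume (Metric.closedBall x r) := by
  have hae := Besicovitch.ae_tendsto_measure_inter_div (volume : Measure ℝ) A
  have hne : volume.restrict A ≠ 0 := by
    intro h
    rw [← Measure.restrict_apply_univ A, h] at hA
    simp at hA
  have : (ae (volume.restrict A)).NeBot := ae_neBot.mpr hne
  obtain ⟨x, hx⟩ := hae.exists
  have hsub : (1:ℝ≥0∞) - ε < 1 := ENNReal.sub_lt_self ENNReal.one_ne_top one_ne_zero hε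
  have hev := hx.eventually (Ioi_mem_nhds hsub)
  obtain ⟨r, hrpos, hr⟩ := (hev.and self_mem_nhdsWithin).exists
  refine ⟨x, r, hr, ?_⟩
  set B := Metric.closedBall x r
  have hBvol : volume B = ENNReal.ofReal (2 * r) := Real.volume_closedBall x r
  have hB0 : volume B ≠ 0 := by
    rw [hBvol]; simp only [ne_eq, ENNReal.ofReal_eq_zero, not_le]; linarith
  have hBt : volume B ≠ ∞ := by rw [hBvol]; exact ENNReal.ofReal_ne_top
  have h1 : (1 - ε) * volume B ≤ volume (A ∩ B) := by
    have := (ENNReal.lt_div_iff_mul_lt (Or.inl hB0) (Or.inl hBt)).mp hrpos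
    exact this.le
  have hsplit : volume (B ∩ A) + volume (B \ A) = volume B := measure_inter_add_diff B hAm
  have h2 : volume (B \ A) + (1 - ε) * volume B ≤ volume B := by
    calc volume (B \ A) + (1 - ε) * volume B ≤ volume (B \ A) + volume (A ∩ B) :=
          add_le_add_right h1 _
      _ = volume B := by rw [inter_comm A B] at *; rw [add_comm]; exact hsplit
  have h3 : volume B ≤ ε * volume B + (1 - ε) * volume B := by
    calc volume B = 1 * volume B := (one_mul _).symm
      _ ≤ (ε + (1 - ε)) * volume B := by
          apply mul_le_mul_left
          calc (1:ℝ≥0∞) ≤ 1 - ε + ε := le_tsub_add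
            _ = ε + (1 - ε) := add_comm _ _
      _ = ε * volume B + (1 - ε) * volume B := by rw [add_mul]
  have hfin : (1 - ε) * volume B ≠ ∞ :=
    ENNReal.mul_ne_top (by simp [ENNReal.sub_ne_top]) hBt
  exact ENNReal.le_of_add_le_add_right hfin (le_trans h2 h3)

end Auxiliary

open Set
open scoped ENNReal

/-- If `E ⊆ 𝕋` is measurable with `|E| > 0` and `(n_j)` is a strictly
increasing sequence of positive integers, then the set
`limsup_j F_{n_j}(E) = ⋂_k ⋃_{j ≥ k} {z^{n_j} : z ∈ E}` has full outer measure `1`. -/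
theorem limsup_power_images_full_measure
    (n : ℕ → ℕ) (hmono : StrictMono n) (hpos : ∀ j, 0 < n j)
    (E : Set ℂ) (hE : MeasurableSet E) (hE𝕋 : E ⊆ Metric.sphere (0 : ℂ) 1)
    (hpos' : 0 < circleHaar E) :
    circleHaar (⋂ k : ℕ, ⋃ j : ℕ, ⋃ (_ : k ≤ j), (fun z : ℂ => z ^ n j) '' E) = 1 := by
  classical
  set L := ⋂ k : ℕ, ⋃ j : ℕ, ⋃ (_ : k ≤ j), (fun z : ℂ => z ^ n j) '' E with hL
  have hL1 : circleHaar L ≤ 1 := by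
    rw [← circleHaar_univ]; exact measure_mono (Set.subset_univ _)
  refine le_antisymm hL1 ?_
  set T := toMeasurable circleHaar L with hT
  have hTm : MeasurableSet T := measurableSet_toMeasurable _ _
  have hLT : circleHaar L = circleHaar T := (measure_toMeasurable L).symm
  rw [hLT]
  have hcompl : circleHaar Tᶜ = 0 := by
    by_contra hB0
    set B := Tᶜ with hBdef
    have hBm : MeasurableSet B := hTm.compl
    have hBL : B ⊆ Lᶜ := Set.compl_subset_compl.mpr (subset_toMeasurable _ _)
    set C : ℕ → Set ℂ := fun k => ⋂ j, ⋂ (_ : k ≤ j), ((fun z : ℂ => z ^ n j) '' E)ᶜ with hC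
    have hLc : Lᶜ = ⋃ k, C k := by
      rw [hL]
      simp only [Set.compl_iInter, Set.compl_iUnion, hC]
    have hmono' : Monotone (fun k => B ∩ C k) := by
      intro a b hab
      apply Set.inter_subset_inter_right
      intro z hz
      simp only [hC, Set.mem_iInter] at hz ⊢
      intro j hj
      exact hz j (hab.trans hj)
    have hBun : B = ⋃ k, B ∩ C k := by
      rw [← Set.inter_iUnion, ← hLc]
      exact (Set.inter_eq_left.mpr hBL).symm
    have hsup : circleHaar B = ⨆ k, circleHaar (B ∩ C k) := by
      have h := Directed.measure_iUnion (μ := circleHaar) (hmono'.directed_le)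
      rw [← hBun] at h
      exact h
    have hex : ∃ k, circleHaar (B ∩ C k) ≠ 0 := by
      by_contra h
      push_neg at h
      apply hB0
      rw [hsup]
      simp [h]
    obtain ⟨k, hk⟩ := hex
    set S := B ∩ C k ∩ Metric.sphere (0:ℂ) 1 with hS
    have hSsphere : S ⊆ Metric.sphere (0:ℂ) 1 := Set.inter_subset_right
    have hsphc : circleHaar (Metric.sphere (0:ℂ) 1)ᶜ = 0 := by
      have hempty : cExp ⁻¹' (Metric.sphere (0:ℂ) 1)ᶜ ∩ Set.Ico (0:ℝ) 1 = ∅ := by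
        ext t
        simp only [Set.mem_inter_iff, Set.mem_preimage, Set.mem_compl_iff,
          Set.mem_empty_iff_false, iff_false, not_and]
        intro h
        exact absurd (cExp_mem_sphere t) h
      rw [circleHaar_apply Metric.isClosed_sphere.measurableSet.compl, hempty, measure_empty]
    have hSpos : 0 < circleHaar S := by
      rcases eq_or_ne (circleHaar S) 0 with h | h
      · exfalso
        apply hk
        have hsub2 : B ∩ C k ⊆ S ∪ (Metric.sphere (0:ℂ) 1)ᶜ := by
          intro z hz
          by_cases hzs : z ∈ Metric.sphere (0:ℂ) 1
          · exact Or.inl ⟨hz, hzs⟩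
          · exact Or.inr hzs
        have := measure_union_le (μ := circleHaar) S (Metric.sphere (0:ℂ) 1)ᶜ
        have hle := (measure_mono hsub2).trans this
        rw [h, hsphc, add_zero] at hle
        exact le_antisymm hle (zero_le)
      · exact pos_iff_ne_zero.mpr h
    have hdisj : ∀ j, k ≤ j → ∀ z ∈ E, z ^ n j ∉ S := by
      intro j hj z hz hmem
      have h1 : z ^ n j ∈ C k := hmem.1.2
      simp only [hC, Set.mem_iInter] at h1
      exact h1 j hj ⟨z, hz, rfl⟩
    set Q := cExp ⁻¹' S with hQ
    have hQper : ∀ m : ℤ, (fun t => t + (m:ℝ)) ⁻¹' Q = Q := by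
      intro m
      ext t
      simp only [hQ, Set.mem_preimage, cExp_add_int]
    set α := volume (Q ∩ Set.Ico (0:ℝ) 1) with hα
    have hαpos : 0 < α := lt_of_lt_of_le hSpos (circleHaar_le_vol_preimage hSsphere)
    have hαtop : α ≠ ∞ := by
      have h1 : α ≤ volume (Set.Ico (0:ℝ) 1) := measure_mono Set.inter_subset_right
      rw [Real.volume_Ico] at h1
      exact (h1.trans_lt (by norm_num)).ne
    set A := cExp ⁻¹' E ∩ Set.Ico (0:ℝ) 1 with hA
    have hAm : MeasurableSet A := (cExp_meas hE).inter measurableSet_Ico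
    have hAvol : 0 < volume A := by
      have := circleHaar_apply hE
      rw [this] at hpos'
      exact hpos'
    have hAdisj : ∀ j, k ≤ j → ∀ t ∈ A, ((n j : ℝ)) * t ∉ Q := by
      intro j hj t ht hQt
      have h1 : cExp t ∈ E := ht.1
      have h2 := hdisj j hj _ h1
      rw [cExp_pow] at h2
      exact h2 hQt
    -- density point
    set ε : ℝ≥0∞ := α * ENNReal.ofReal (1/4) with hε
    have hεne : ε ≠ 0 := by
      apply mul_ne_zero hαpos.ne'
      simp only [ne_eq, ENNReal.ofReal_eq_zero, not_le]
      norm_num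
    obtain ⟨x, r, hrpos, hdens⟩ := exists_density_ball hAm hAvol hεne
    -- choose the index
    set j := max k ⌈2/r⌉₊ with hjdef
    have hkj : k ≤ j := le_max_left _ _
    set N := n j with hN
    have hN2 : 2 / r ≤ (N:ℝ) := by
      have h1 : ⌈2/r⌉₊ ≤ j := le_max_right _ _
      have h2 : j ≤ n j := hmono.le_apply
      calc 2/r ≤ (⌈2/r⌉₊ : ℝ) := Nat.le_ceil _
        _ ≤ (N:ℝ) := by exact_mod_cast h1.trans h2
    have hNpos : 0 < (N:ℝ) := by exact_mod_cast hpos j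
    have hNr : 2 ≤ (N:ℝ) * r := by
      rw [div_le_iff₀ hrpos] at hN2
      linarith
    set c := ⌈(N:ℝ) * (x - r)⌉ with hc
    set d := ⌊(N:ℝ) * (x + r)⌋ with hd
    have hcle : (c:ℝ) < (N:ℝ)*(x-r) + 1 := Int.ceil_lt_add_one _
    have hcge : (N:ℝ)*(x-r) ≤ c := Int.le_ceil _
    have hdge : (N:ℝ)*(x+r) - 1 < d := Int.sub_one_lt_floor _
    have hdle : (d:ℝ) ≤ (N:ℝ)*(x+r) := Int.floor_le _
    have hdc : (N:ℝ)*r ≤ (d:ℝ) - c := by nlinarith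
    have hcd : c ≤ d := by
      have h1 : (c:ℝ) ≤ d := by nlinarith
      exact_mod_cast h1
    set K := (d - c).toNat with hK
    have hKcast : (K:ℝ) = (d:ℝ) - c := by
      have h0 : ((d - c).toNat : ℤ) = d - c := Int.toNat_of_nonneg (sub_nonneg.mpr hcd)
      rw [hK]
      exact_mod_cast congrArg (Int.cast : ℤ → ℝ) h0
    have hcK : (c:ℝ) + K = (d:ℝ) := by rw [hKcast]; ring
    have hblock := vol_periodic_interval hQper c K
    -- scaling
    have hIco : (fun t => (N:ℝ) * t) ⁻¹' Set.Ico (c:ℝ) ((c:ℝ)+K)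
        = Set.Ico ((c:ℝ)/N) (((c:ℝ)+K)/N) := by
      ext t
      simp only [Set.mem_preimage, Set.mem_Ico, div_le_iff₀ hNpos, lt_div_iff₀ hNpos]
      constructor <;> rintro ⟨h1, h2⟩ <;> constructor <;>
        linarith [mul_comm (N:ℝ) t, mul_comm t (N:ℝ)]
    have hscale := vol_preimage_mul hNpos (Q ∩ Set.Ico (c:ℝ) ((c:ℝ)+K))
    rw [Set.preimage_inter, hIco] at hscale
    -- lower bound
    have hlow : ENNReal.ofReal r * α
        ≤ volume (((fun t => (N:ℝ)*t) ⁻¹' Q) ∩ Set.Ico ((c:ℝ)/N) (((c:ℝ)+K)/N)) := by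
      rw [hscale]
      calc ENNReal.ofReal r * α = ENNReal.ofReal ((N:ℝ)⁻¹ * ((N:ℝ)*r)) * α := by
            congr 2
            field_simp
        _ = ENNReal.ofReal (N:ℝ)⁻¹ * (ENNReal.ofReal ((N:ℝ)*r) * α) := by
            rw [ENNReal.ofReal_mul (by positivity), mul_assoc]
        _ ≤ ENNReal.ofReal (N:ℝ)⁻¹ * ((K:ℝ≥0∞) * α) := by
            gcongr
            calc ENNReal.ofReal ((N:ℝ)*r) ≤ ENNReal.ofReal (K:ℝ) := by
                  apply ENNReal.ofReal_le_ofReal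
                  rw [hKcast]; linarith
              _ = (K:ℝ≥0∞) := ENNReal.ofReal_natCast K
        _ ≤ ENNReal.ofReal (N:ℝ)⁻¹ * volume (Q ∩ Set.Ico (c:ℝ) ((c:ℝ)+K)) := by
            gcongr
    -- upper bound
    have hsubset : ((fun t => (N:ℝ)*t) ⁻¹' Q) ∩ Set.Ico ((c:ℝ)/N) (((c:ℝ)+K)/N)
        ⊆ Metric.closedBall x r \ A := by
      rintro t ⟨htQ, ht⟩
      constructor
      · rw [Real.closedBall_eq_Icc]
        have h1 : (c:ℝ)/N ≤ t := ht.1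
        have h2 : t < ((c:ℝ)+K)/N := ht.2
        have h3 : x - r ≤ (c:ℝ)/N := by
          rw [le_div_iff₀ hNpos]
          linarith [mul_comm (x-r) (N:ℝ)]
        have h4 : ((c:ℝ)+K)/N ≤ x + r := by
          rw [div_le_iff₀ hNpos, hcK]
          linarith [mul_comm (x+r) (N:ℝ)]
        exact ⟨by linarith, by linarith⟩
      · intro htA
        exact hAdisj j hkj t htA htQ
    have hup : volume (((fun t => (N:ℝ)*t) ⁻¹' Q) ∩ Set.Ico ((c:ℝ)/N) (((c:ℝ)+K)/N))
        ≤ ε * ENNReal.ofReal (2*r) := by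
      calc volume (((fun t => (N:ℝ)*t) ⁻¹' Q) ∩ Set.Ico ((c:ℝ)/N) (((c:ℝ)+K)/N))
          ≤ volume (Metric.closedBall x r \ A) := measure_mono hsubset
        _ ≤ ε * volume (Metric.closedBall x r) := hdens
        _ = ε * ENNReal.ofReal (2*r) := by rw [Real.volume_closedBall]
    have hfinal : ENNReal.ofReal r * α ≤ ε * ENNReal.ofReal (2*r) := le_trans hlow hup
    -- derive contradiction
    have hrhs : ε * ENNReal.ofReal (2*r) = (α * ENNReal.ofReal (1/2)) * ENNReal.ofReal r := by
      rw [hε, mul_assoc, mul_assoc, ← ENNReal.ofReal_mul (by norm_num : (0:ℝ) ≤ 1/4),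
        ← ENNReal.ofReal_mul (by norm_num : (0:ℝ) ≤ 1/2)]
      congr 2
      ring
    rw [hrhs] at hfinal
    have hr0 : ENNReal.ofReal r ≠ 0 := by
      simp only [ne_eq, ENNReal.ofReal_eq_zero, not_le]; linarith
    have hrt : ENNReal.ofReal r ≠ ∞ := ENNReal.ofReal_ne_top
    rw [mul_comm (ENNReal.ofReal r) α] at hfinal
    have hcancel : α ≤ α * ENNReal.ofReal (1/2) :=
      (ENNReal.mul_le_mul_iff_left hr0 hrt).mp hfinal
    have hlt : α * ENNReal.ofReal (1/2) < α * 1 := by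
      apply ENNReal.mul_lt_mul_right hαpos.ne' hαtop
      rw [ENNReal.ofReal_lt_one]
      norm_num
    rw [mul_one] at hlt
    exact absurd hcancel (not_le.mpr hlt)
  have hfull := measure_add_measure_compl hTm (μ := circleHaar)
  rw [circleHaar_univ, hcompl, add_zero] at hfull
  exact hfull.ge
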